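/- arXiv:2312.06603 — 3 statements merged into one kernel-verified Lean document; each statement's English description precedes it below -/
import Mathlib

section
/- There exist seven points v₀, …, v₆ of the Euclidean plane in general position (pairwise distinct, no three collinear) such that in the closed polygon with segments sᵢ = [vᵢ, v_{(i+1) mod 7}], every pair of non-adjacent segments (indices with j ≢ i, i±1 (mod 7)) has nonempty intersection; that is, the polygon attains all 14 = 7·(7−3)/2 possible crossings. -/
/-- Integer coordinates of the seven vertices of a `{7/3}` heptagram (scaled by 10). -/
def heptX : Fin 7 → ℤ × ℤ := ![(10, 0), (-9, 4), (6, -8), (-2, 10), (-2, -10), (6, 8), (-9, -4)]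

/-- Numerators of the intersection parameter of side `i` with side `j`. -/
def heptN : Fin 7 → Fin 7 → ℤ := ![![0, 0, 68, 12, 4, 7, 0],
  ![0, 0, 0, 7, 119, 1, 19],
  ![84, 0, 0, 0, 4, 40, 4],
  ![71, 29, 0, 0, 0, 21, 119],
  ![7, 21, 5, 0, 0, 0, 71],
  ![17, 2, 64, 8, 0, 0, 0],
  ![0, 5, 7, 7, 87, 0, 0]]

/-- Denominators of the intersection parameter of side `i` with side `j`. -/
def heptD : Fin 7 → Fin 7 → ℤ := ![![1, 1, 155, 19, 11, 12, 1],
  ![1, 1, 1, 15, 183, 3, 36],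
  ![155, 1, 1, 1, 9, 61, 11],
  ![190, 50, 1, 1, 1, 50, 190],
  ![11, 61, 9, 1, 1, 1, 155],
  ![36, 3, 183, 15, 1, 1, 1],
  ![1, 12, 11, 19, 155, 1, 1]]

/-- Embedding of an integer pair into the Euclidean plane. -/
noncomputable def emb (a : ℤ × ℤ) : EuclideanSpace ℝ (Fin 2) :=
  (WithLp.equiv 2 (Fin 2 → ℝ)).symm ![(a.1 : ℝ), (a.2 : ℝ)]

lemma emb_apply0 (a : ℤ × ℤ) : emb a 0 = (a.1 : ℝ) := rfl
lemma emb_apply1 (a : ℤ × ℤ) : emb a 1 = (a.2 : ℝ) := rfl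

lemma emb_injective : Function.Injective emb := by
  intro a b h
  have h0 : emb a 0 = emb b 0 := by rw [h]
  have h1 : emb a 1 = emb b 1 := by rw [h]
  rw [emb_apply0, emb_apply0] at h0
  rw [emb_apply1, emb_apply1] at h1
  exact Prod.ext (Int.cast_injective (α := ℝ) h0) (Int.cast_injective (α := ℝ) h1)

lemma apply0_eq (x y : ℝ) (A B : EuclideanSpace ℝ (Fin 2)) :
    (x • A + y • B) 0 = x * A 0 + y * B 0 := rfl

lemma apply1_eq (x y : ℝ) (A B : EuclideanSpace ℝ (Fin 2)) :
    (x • A + y • B) 1 = x * A 1 + y * B 1 := rfl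

lemma cross_aux (a b c d : ℤ × ℤ) (p q r s : ℤ) (hq : 0 < q) (hs : 0 < s)
    (hp0 : 0 ≤ p) (hp1 : p ≤ q) (hr0 : 0 ≤ r) (hr1 : r ≤ s)
    (h1 : s * ((q - p) * a.1 + p * b.1) = q * ((s - r) * c.1 + r * d.1))
    (h2 : s * ((q - p) * a.2 + p * b.2) = q * ((s - r) * c.2 + r * d.2)) :
    (segment ℝ (emb a) (emb b) ∩ segment ℝ (emb c) (emb d)).Nonempty := by
  have hq' : (0 : ℝ) < (q : ℝ) := by exact_mod_cast hq
  have hs' : (0 : ℝ) < (s : ℝ) := by exact_mod_cast hs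
  set t : ℝ := (p : ℝ) / (q : ℝ) with htdef
  set u : ℝ := (r : ℝ) / (s : ℝ) with hudef
  have ht0 : 0 ≤ t := div_nonneg (by exact_mod_cast hp0) hq'.le
  have ht1 : t ≤ 1 := (div_le_one hq').2 (by exact_mod_cast hp1)
  have hu0 : 0 ≤ u := div_nonneg (by exact_mod_cast hr0) hs'.le
  have hu1 : u ≤ 1 := (div_le_one hs').2 (by exact_mod_cast hr1)
  refine ⟨(1 - t) • emb a + t • emb b,
    ⟨1 - t, t, by linarith, ht0, by ring, rfl⟩,
    ⟨1 - u, u, by linarith, hu0, by ring, ?_⟩⟩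
  have h1' : (s : ℝ) * ((q - p) * a.1 + p * b.1) = q * ((s - r) * c.1 + r * d.1) := by
    exact_mod_cast h1
  have h2' : (s : ℝ) * ((q - p) * a.2 + p * b.2) = q * ((s - r) * c.2 + r * d.2) := by
    exact_mod_cast h2
  ext m
  fin_cases m
  · show ((1 - u) • emb c + u • emb d) 0 = ((1 - t) • emb a + t • emb b) 0
    rw [apply0_eq, apply0_eq, emb_apply0, emb_apply0, emb_apply0, emb_apply0, htdef, hudef]
    field_simp
    linear_combination -h1'
  · show ((1 - u) • emb c + u • emb d) 1 = ((1 - t) • emb a + t • emb b) 1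
    rw [apply1_eq, apply1_eq, emb_apply1, emb_apply1, emb_apply1, emb_apply1, htdef, hudef]
    field_simp
    linear_combination -h2'

lemma not_collinear_of_det (a b c : EuclideanSpace ℝ (Fin 2))
    (h : (b 0 - a 0) * (c 1 - a 1) - (b 1 - a 1) * (c 0 - a 0) ≠ 0) :
    ¬ Collinear ℝ ({a, b, c} : Set (EuclideanSpace ℝ (Fin 2))) := by
  intro hc
  obtain ⟨w, hw⟩ := (collinear_iff_of_mem (Set.mem_insert a _)).1 hc
  obtain ⟨tb, htb⟩ := hw b (by simp)
  obtain ⟨tc, htc⟩ := hw c (by simp)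
  apply h
  have hb0 : b 0 = tb * w 0 + a 0 := by rw [htb]; rfl
  have hb1 : b 1 = tb * w 1 + a 1 := by rw [htb]; rfl
  have hc0 : c 0 = tc * w 0 + a 0 := by rw [htc]; rfl
  have hc1 : c 1 = tc * w 1 + a 1 := by rw [htc]; rfl
  rw [hb0, hb1, hc0, hc1]; ring

lemma heptX_inj : ∀ i j : Fin 7, i ≠ j → heptX i ≠ heptX j := by decide

lemma hept_det : ∀ i j k : Fin 7, i ≠ j → j ≠ k → i ≠ k →
    ((heptX j).1 - (heptX i).1) * ((heptX k).2 - (heptX i).2)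
      - ((heptX j).2 - (heptX i).2) * ((heptX k).1 - (heptX i).1) ≠ 0 := by decide

lemma hept_cross : ∀ i j : Fin 7, j ≠ i → j ≠ i + 1 → i ≠ j + 1 →
    0 < heptD i j ∧ 0 ≤ heptN i j ∧ heptN i j ≤ heptD i j ∧
    heptD j i * ((heptD i j - heptN i j) * (heptX i).1 + heptN i j * (heptX (i + 1)).1)
      = heptD i j * ((heptD j i - heptN j i) * (heptX j).1 + heptN j i * (heptX (j + 1)).1) ∧
    heptD j i * ((heptD i j - heptN i j) * (heptX i).2 + heptN i j * (heptX (i + 1)).2)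
      = heptD i j * ((heptD j i - heptN j i) * (heptX j).2 + heptN j i * (heptX (j + 1)).2) := by
  decide

/-- There exist seven points in general position in the plane whose closed polygon attains
all `7·(7−3)/2 = 14` possible crossings: every pair of non-adjacent sides intersects. -/
theorem exists_heptagon_all_crossings :
    ∃ v : Fin 7 → EuclideanSpace ℝ (Fin 2),
      (∀ i j : Fin 7, i ≠ j → v i ≠ v j) ∧
      (∀ i j k : Fin 7, i ≠ j → j ≠ k → i ≠ k →
        ¬ Collinear ℝ ({v i, v j, v k} : Set (EuclideanSpace ℝ (Fin 2)))) ∧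
      (∀ i j : Fin 7, j ≠ i → j ≠ i + 1 → i ≠ j + 1 →
        (segment ℝ (v i) (v (i + 1)) ∩ segment ℝ (v j) (v (j + 1))).Nonempty) := by
  refine ⟨fun i => emb (heptX i), ?_, ?_, ?_⟩
  · intro i j hij h
    exact heptX_inj i j hij (emb_injective h)
  · intro i j k hij hjk hik
    apply not_collinear_of_det
    show ((emb (heptX j)) 0 - (emb (heptX i)) 0) * ((emb (heptX k)) 1 - (emb (heptX i)) 1)
      - ((emb (heptX j)) 1 - (emb (heptX i)) 1) * ((emb (heptX k)) 0 - (emb (heptX i)) 0) ≠ 0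
    rw [emb_apply0, emb_apply0, emb_apply0, emb_apply1, emb_apply1, emb_apply1]
    have hd := hept_det i j k hij hjk hik
    intro hc
    apply hd
    exact Int.cast_injective (α := ℝ) (by push_cast; simpa using hc)
  · intro i j h1 h2 h3
    obtain ⟨hd, hn0, hn1, he1, he2⟩ := hept_cross i j h1 h2 h3
    obtain ⟨hd', hn0', hn1', -, -⟩ := hept_cross j i (Ne.symm h1) h3 h2
    exact cross_aux _ _ _ _ _ _ _ _ hd hd' hn0 hn1 hn0' hn1' he1 he2
end

section
/- For every six points v₀, …, v₅ of the Euclidean plane in general position (pairwise distinct, no three collinear), the closed polygon with segments sᵢ = [vᵢ, v_{(i+1) mod 6}] does not attain all 9 = 6·(6−3)/2 possible crossings: there exists a pair of non-adjacent segments (indices with j ≢ i, i±1 (mod 6)) whose intersection is empty. -/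
/-- Affine determinant (twice signed area) of three planar points. -/
def det3 (p q r : EuclideanSpace ℝ (Fin 2)) : ℝ :=
  (q 0 - p 0) * (r 1 - p 1) - (q 1 - p 1) * (r 0 - p 0)

lemma hex_neg_left {a b : ℝ} (h : a * b < 0) (ha : 0 < a) : b < 0 := by nlinarith
lemma hex_neg_right {a b : ℝ} (h : a * b < 0) (hb : 0 < b) : a < 0 := by nlinarith
lemma hex_pos_left {a b : ℝ} (h : a * b < 0) (ha : a < 0) : 0 < b := by nlinarith
lemma hex_pos_right {a b : ℝ} (h : a * b < 0) (hb : b < 0) : 0 < a := by nlinarith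

/-- If the affine determinant vanishes, the three points are collinear. -/
lemma collinear_of_det3 (p q r : EuclideanSpace ℝ (Fin 2)) (h : det3 p q r = 0) :
    Collinear ℝ ({p, q, r} : Set (EuclideanSpace ℝ (Fin 2))) := by
  by_cases hq : q = p
  · rw [hq]
    have hs : ({p, p, r} : Set (EuclideanSpace ℝ (Fin 2))) = {p, r} := by simp
    rw [hs]
    exact collinear_pair ℝ p r
  · have hc : q 0 ≠ p 0 ∨ q 1 ≠ p 1 := by
      by_contra hh
      push_neg at hh
      exact hq (by ext i; fin_cases i <;> simp [hh.1, hh.2])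
    rw [collinear_iff_of_mem (Set.mem_insert p {q, r})]
    refine ⟨q - p, ?_⟩
    intro x hx
    simp only [Set.mem_insert_iff, Set.mem_singleton_iff] at hx
    unfold det3 at h
    rcases hx with rfl | rfl | rfl
    · exact ⟨0, by simp⟩
    · refine ⟨1, ?_⟩
      ext i
      fin_cases i <;>
        simp [vadd_eq_add] <;> ring
    · rcases hc with hc | hc
      · refine ⟨(x 0 - p 0) / (q 0 - p 0), ?_⟩
        have hne : q 0 - p 0 ≠ 0 := sub_ne_zero.mpr hc
        ext i
        fin_cases i <;> simp [vadd_eq_add] <;> field_simp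
        · ring
        · linear_combination h
      · refine ⟨(x 1 - p 1) / (q 1 - p 1), ?_⟩
        have hne : q 1 - p 1 ≠ 0 := sub_ne_zero.mpr hc
        ext i
        fin_cases i <;> simp [vadd_eq_add] <;> field_simp
        · linear_combination -h
        · ring

/-- If two segments meet and the endpoint triples are nondegenerate, the two
endpoints of the second segment lie strictly on opposite sides of the line
through the first segment. -/
lemma cross_prod_neg (a b c d : EuclideanSpace ℝ (Fin 2))
    (hc : det3 a b c ≠ 0) (hd : det3 a b d ≠ 0)
    (hx : (segment ℝ a b ∩ segment ℝ c d).Nonempty) :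
    det3 a b c * det3 a b d < 0 := by
  obtain ⟨x, hab, hcd⟩ := hx
  rcases hab with ⟨u, w, hu, hw, huw, hab⟩
  rcases hcd with ⟨s, t, hs, ht, hst, hcd⟩
  have h0 : (s • c + t • d) 0 = (u • a + w • b) 0 := by rw [hab, hcd]
  have h1 : (s • c + t • d) 1 = (u • a + w • b) 1 := by rw [hab, hcd]
  have e0 : s * c 0 + t * d 0 = u * a 0 + w * b 0 := by simpa using h0
  have e1 : s * c 1 + t * d 1 = u * a 1 + w * b 1 := by simpa using h1
  have hu' : u = 1 - w := by linarith
  have hs' : s = 1 - t := by linarith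
  subst hu' hs'
  have key : (1 - t) * det3 a b c + t * det3 a b d = 0 := by
    unfold det3
    linear_combination (b 0 - a 0) * e1 - (b 1 - a 1) * e0
  have ht1 : t ≤ 1 := by linarith
  rcases eq_or_lt_of_le ht with h0' | h0'
  · exfalso
    apply hc
    rw [← h0'] at key
    simpa using key
  rcases eq_or_lt_of_le ht1 with h1' | h1'
  · exfalso
    apply hd
    rw [h1'] at key
    simpa using key
  rcases lt_or_gt_of_ne hc with hcs | hcs
  · have hDd : 0 < det3 a b d := by nlinarith [key]
    exact mul_neg_of_neg_of_pos hcs hDd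
  · have hDd : det3 a b d < 0 := by nlinarith [key]
    exact mul_neg_of_pos_of_neg hcs hDd

/-- No closed hexagon on six points in general position in the plane attains all
`6·(6−3)/2 = 9` possible crossings: some pair of non-adjacent sides is disjoint. -/
theorem hexagon_not_all_crossings
    (v : Fin 6 → EuclideanSpace ℝ (Fin 2))
    (hdist : ∀ i j : Fin 6, i ≠ j → v i ≠ v j)
    (hcol : ∀ i j k : Fin 6, i ≠ j → j ≠ k → i ≠ k →
      ¬ Collinear ℝ ({v i, v j, v k} : Set (EuclideanSpace ℝ (Fin 2)))) :
    ∃ i j : Fin 6, j ≠ i ∧ j ≠ i + 1 ∧ i ≠ j + 1 ∧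
      segment ℝ (v i) (v (i + 1)) ∩ segment ℝ (v j) (v (j + 1)) = ∅ := by
  by_contra hcon
  push_neg at hcon
  have c02 : (segment ℝ (v 0) (v 1) ∩ segment ℝ (v 2) (v 3)).Nonempty :=
    hcon 0 2 (by decide) (by decide) (by decide)
  have c13 : (segment ℝ (v 1) (v 2) ∩ segment ℝ (v 3) (v 4)).Nonempty :=
    hcon 1 3 (by decide) (by decide) (by decide)
  have c14 : (segment ℝ (v 1) (v 2) ∩ segment ℝ (v 4) (v 5)).Nonempty :=
    hcon 1 4 (by decide) (by decide) (by decide)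
  have c15 : (segment ℝ (v 1) (v 2) ∩ segment ℝ (v 5) (v 0)).Nonempty :=
    hcon 1 5 (by decide) (by decide) (by decide)
  have c20 : (segment ℝ (v 2) (v 3) ∩ segment ℝ (v 0) (v 1)).Nonempty := by
    obtain ⟨x, h1, h2⟩ := c02; exact ⟨x, h2, h1⟩
  have nd : ∀ i j k : Fin 6, i ≠ j → j ≠ k → i ≠ k → det3 (v i) (v j) (v k) ≠ 0 := by
    intro i j k hij hjk hik h
    exact hcol i j k hij hjk hik (collinear_of_det3 _ _ _ h)
  have n012 := nd 0 1 2 (by decide) (by decide) (by decide)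
  have n013 := nd 0 1 3 (by decide) (by decide) (by decide)
  have n123 := nd 1 2 3 (by decide) (by decide) (by decide)
  have n124 := nd 1 2 4 (by decide) (by decide) (by decide)
  have n125 := nd 1 2 5 (by decide) (by decide) (by decide)
  have n120 := nd 1 2 0 (by decide) (by decide) (by decide)
  have n230 := nd 2 3 0 (by decide) (by decide) (by decide)
  have n231 := nd 2 3 1 (by decide) (by decide) (by decide)
  have p1 := cross_prod_neg (v 0) (v 1) (v 2) (v 3) n012 n013 c02
  have p2 := cross_prod_neg (v 2) (v 3) (v 0) (v 1) n230 n231 c20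
  have p3 := cross_prod_neg (v 1) (v 2) (v 3) (v 4) n123 n124 c13
  have p4 := cross_prod_neg (v 1) (v 2) (v 4) (v 5) n124 n125 c14
  have p5 := cross_prod_neg (v 1) (v 2) (v 5) (v 0) n125 n120 c15
  have b1 : det3 (v 1) (v 2) (v 0) = det3 (v 0) (v 1) (v 2) := by unfold det3; ring
  have b2 : det3 (v 2) (v 3) (v 1) = det3 (v 1) (v 2) (v 3) := by unfold det3; ring
  have b3 : det3 (v 2) (v 3) (v 0) = det3 (v 0) (v 2) (v 3) := by unfold det3; ring
  rw [b1] at p5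
  rw [b2, b3] at p2
  have L : det3 (v 1) (v 2) (v 3) - det3 (v 0) (v 2) (v 3) + det3 (v 0) (v 1) (v 3)
      - det3 (v 0) (v 1) (v 2) = 0 := by unfold det3; ring
  rcases lt_or_gt_of_ne n012 with h | h
  · -- det3 v0 v1 v2 < 0
    have q125 : 0 < det3 (v 1) (v 2) (v 5) := hex_pos_right p5 h
    have q124 : det3 (v 1) (v 2) (v 4) < 0 := hex_neg_right p4 q125
    have q123 : 0 < det3 (v 1) (v 2) (v 3) := hex_pos_right p3 q124
    have q023 : det3 (v 0) (v 2) (v 3) < 0 := hex_neg_right p2 q123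
    have q013 : 0 < det3 (v 0) (v 1) (v 3) := hex_pos_left p1 h
    linarith
  · -- 0 < det3 v0 v1 v2
    have q125 : det3 (v 1) (v 2) (v 5) < 0 := hex_neg_right p5 h
    have q124 : 0 < det3 (v 1) (v 2) (v 4) := hex_pos_right p4 q125
    have q123 : det3 (v 1) (v 2) (v 3) < 0 := hex_neg_right p3 q124
    have q023 : 0 < det3 (v 0) (v 2) (v 3) := hex_pos_right p2 q123
    have q013 : det3 (v 0) (v 1) (v 3) < 0 := hex_neg_left p1 h
    linarith
end

section
/- There exist six points x, a, b, c, d, e of the Euclidean plane in general position (pairwise distinct, no three collinear) such that the seven segments of the bouquet configuration consisting of the triangle loop [x,a], [a,b], [b,x] and the quadrilateral loop [x,c], [c,d], [d,e], [e,x] have at least 7 crossing pairs, i.e., at least 7 unordered pairs of segments that share no endpoint and have nonempty intersection. -/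
/-- The closed segment spanned by a pair of points of the Euclidean plane. -/
def segOf (p : EuclideanSpace ℝ (Fin 2) × EuclideanSpace ℝ (Fin 2)) :
    Set (EuclideanSpace ℝ (Fin 2)) :=
  segment ℝ p.1 p.2

/-- Two segments (given by their endpoint pairs) share an endpoint. -/
def SharesEndpoint (p q : EuclideanSpace ℝ (Fin 2) × EuclideanSpace ℝ (Fin 2)) : Prop :=
  p.1 = q.1 ∨ p.1 = q.2 ∨ p.2 = q.1 ∨ p.2 = q.2

@[simp] lemma vec6_five' {α : Type*} (p0 p1 p2 p3 p4 p5 : α) :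
    ![p0,p1,p2,p3,p4,p5] (5 : Fin 6) = p5 := rfl
@[simp] lemma vec7_five' {α : Type*} (p0 p1 p2 p3 p4 p5 p6 : α) :
    ![p0,p1,p2,p3,p4,p5,p6] (5 : Fin 7) = p5 := rfl
@[simp] lemma vec7_six' {α : Type*} (p0 p1 p2 p3 p4 p5 p6 : α) :
    ![p0,p1,p2,p3,p4,p5,p6] (6 : Fin 7) = p6 := rfl

/-- A point of the plane from its two coordinates. -/
noncomputable def pt (a b : ℝ) : EuclideanSpace ℝ (Fin 2) := WithLp.toLp 2 ![a, b]

@[simp] lemma pt_app0 (a b : ℝ) : pt a b 0 = a := rfl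
@[simp] lemma pt_app1 (a b : ℝ) : pt a b 1 = b := rfl

lemma pt_eq_iff {a b c d : ℝ} : pt a b = pt c d ↔ a = c ∧ b = d := by
  constructor
  · intro h; exact ⟨congrArg (fun v : EuclideanSpace ℝ (Fin 2) => v 0) h,
      congrArg (fun v : EuclideanSpace ℝ (Fin 2) => v 1) h⟩
  · rintro ⟨rfl, rfl⟩; rfl

lemma smul_pt (t a b : ℝ) : t • pt a b = pt (t*a) (t*b) := by
  apply PiLp.ext; intro i; fin_cases i <;> simp [pt]

lemma add_pt (a b c d : ℝ) : pt a b + pt c d = pt (a+c) (b+d) := by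
  apply PiLp.ext; intro i; fin_cases i <;> simp [pt]

lemma mem_seg {t a1 b1 a2 b2 za zb : ℝ} (h0 : 0 ≤ t) (h1 : t ≤ 1)
    (e1 : (1-t)*a1 + t*a2 = za) (e2 : (1-t)*b1 + t*b2 = zb) :
    pt za zb ∈ segment ℝ (pt a1 b1) (pt a2 b2) :=
  ⟨1 - t, t, by linarith, h0, by ring, by
    rw [smul_pt, smul_pt, add_pt, pt_eq_iff]; constructor <;> linarith⟩

lemma not_collinear_of_cross (p q r : EuclideanSpace ℝ (Fin 2))
    (h : (q 0 - p 0) * (r 1 - p 1) - (q 1 - p 1) * (r 0 - p 0) ≠ 0) :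
    ¬ Collinear ℝ ({p, q, r} : Set (EuclideanSpace ℝ (Fin 2))) := by
  intro hc
  rw [collinear_iff_of_mem (Set.mem_insert p _)] at hc
  obtain ⟨v, hv⟩ := hc
  obtain ⟨t1, h1⟩ := hv q (by simp)
  obtain ⟨t2, h2⟩ := hv r (by simp)
  apply h
  have e1 : ∀ i, q i - p i = t1 * v i := by intro i; rw [h1]; simp [vadd_eq_add]
  have e2 : ∀ i, r i - p i = t2 * v i := by intro i; rw [h2]; simp [vadd_eq_add]
  rw [e1, e2, e1, e2]; ring

/-- There exist six points `x, a, b, c, d, e` in general position in the plane such that the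
seven segments of the bouquet configuration (triangle loop `[x,a], [a,b], [b,x]` and
quadrilateral loop `[x,c], [c,d], [d,e], [e,x]`) have at least 7 crossing pairs. -/
theorem exists_bouquet_seven_sticks_seven_crossings :
    ∃ x a b c d e : EuclideanSpace ℝ (Fin 2),
      (∀ i j : Fin 6, i ≠ j → ![x, a, b, c, d, e] i ≠ ![x, a, b, c, d, e] j) ∧
      (∀ i j k : Fin 6, i ≠ j → j ≠ k → i ≠ k →
        ¬ Collinear ℝ ({![x, a, b, c, d, e] i, ![x, a, b, c, d, e] j,
          ![x, a, b, c, d, e] k} : Set (EuclideanSpace ℝ (Fin 2)))) ∧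
      7 ≤ ({p : Fin 7 × Fin 7 | p.1 < p.2 ∧
        ¬ SharesEndpoint (![(x, a), (a, b), (b, x), (x, c), (c, d), (d, e), (e, x)] p.1)
          (![(x, a), (a, b), (b, x), (x, c), (c, d), (d, e), (e, x)] p.2) ∧
        (segOf (![(x, a), (a, b), (b, x), (x, c), (c, d), (d, e), (e, x)] p.1) ∩
          segOf (![(x, a), (a, b), (b, x), (x, c), (c, d), (d, e), (e, x)] p.2)).Nonempty}).ncard := by
  refine ⟨pt 0 0, pt 0 (-1), pt (-2) 6, pt (-1) 1, pt 6 5, pt (-3) 4, ?_, ?_, ?_⟩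
  · intro i j hij
    fin_cases i <;> fin_cases j <;> simp_all [pt_eq_iff]
  · intro i j k hij hjk hik
    fin_cases i <;> fin_cases j <;> fin_cases k <;>
      first
      | exact absurd rfl hij
      | exact absurd rfl hjk
      | exact absurd rfl hik
      | exact not_collinear_of_cross _ _ _ (by norm_num)
  · have hsub : (↑({((1:Fin 7),(3:Fin 7)), (1,4), (1,5), (1,6), (2,4), (2,5), (4,6)} :
        Finset (Fin 7 × Fin 7)) : Set (Fin 7 × Fin 7)) ⊆
        {p : Fin 7 × Fin 7 | p.1 < p.2 ∧
          ¬ SharesEndpoint (![(pt 0 0, pt 0 (-1)), (pt 0 (-1), pt (-2) 6), (pt (-2) 6, pt 0 0),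
              (pt 0 0, pt (-1) 1), (pt (-1) 1, pt 6 5), (pt 6 5, pt (-3) 4),
              (pt (-3) 4, pt 0 0)] p.1)
            (![(pt 0 0, pt 0 (-1)), (pt 0 (-1), pt (-2) 6), (pt (-2) 6, pt 0 0),
              (pt 0 0, pt (-1) 1), (pt (-1) 1, pt 6 5), (pt 6 5, pt (-3) 4),
              (pt (-3) 4, pt 0 0)] p.2) ∧
          (segOf (![(pt 0 0, pt 0 (-1)), (pt 0 (-1), pt (-2) 6), (pt (-2) 6, pt 0 0),
              (pt 0 0, pt (-1) 1), (pt (-1) 1, pt 6 5), (pt 6 5, pt (-3) 4),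
              (pt (-3) 4, pt 0 0)] p.1) ∩
            segOf (![(pt 0 0, pt 0 (-1)), (pt 0 (-1), pt (-2) 6), (pt (-2) 6, pt 0 0),
              (pt 0 0, pt (-1) 1), (pt (-1) 1, pt 6 5), (pt 6 5, pt (-3) 4),
              (pt (-3) 4, pt 0 0)] p.2)).Nonempty} := by
      intro p hp
      simp only [Finset.coe_insert, Finset.coe_singleton, Set.mem_insert_iff,
        Set.mem_singleton_iff] at hp
      rcases hp with rfl | rfl | rfl | rfl | rfl | rfl | rfl <;>
        refine ⟨by decide, ?_, ?_⟩ <;>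
        simp only [Matrix.cons_val_zero, Matrix.cons_val_one, Matrix.head_cons,
          Matrix.cons_val_two, Matrix.tail_cons, Matrix.cons_val_three, Matrix.cons_val_four,
          vec7_five', vec7_six', segOf]
      · simp [SharesEndpoint, pt_eq_iff]
      · exact ⟨pt (-2/5) (2/5), mem_seg (t := 1/5) (by norm_num) (by norm_num)
          (by norm_num) (by norm_num), mem_seg (t := 2/5) (by norm_num) (by norm_num)
          (by norm_num) (by norm_num)⟩
      · simp [SharesEndpoint, pt_eq_iff]
      · exact ⟨pt (-12/19) (23/19), mem_seg (t := 6/19) (by norm_num) (by norm_num)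
          (by norm_num) (by norm_num), mem_seg (t := 1/19) (by norm_num) (by norm_num)
          (by norm_num) (by norm_num)⟩
      · simp [SharesEndpoint, pt_eq_iff]
      · exact ⟨pt (-96/65) (271/65), mem_seg (t := 48/65) (by norm_num) (by norm_num)
          (by norm_num) (by norm_num), mem_seg (t := 54/65) (by norm_num) (by norm_num)
          (by norm_num) (by norm_num)⟩
      · simp [SharesEndpoint, pt_eq_iff]
      · exact ⟨pt (-6/13) (8/13), mem_seg (t := 3/13) (by norm_num) (by norm_num)
          (by norm_num) (by norm_num), mem_seg (t := 11/13) (by norm_num) (by norm_num)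
          (by norm_num) (by norm_num)⟩
      · simp [SharesEndpoint, pt_eq_iff]
      · exact ⟨pt (-11/25) (33/25), mem_seg (t := 39/50) (by norm_num) (by norm_num)
          (by norm_num) (by norm_num), mem_seg (t := 2/25) (by norm_num) (by norm_num)
          (by norm_num) (by norm_num)⟩
      · simp [SharesEndpoint, pt_eq_iff]
      · exact ⟨pt (-39/28) (117/28), mem_seg (t := 17/56) (by norm_num) (by norm_num)
          (by norm_num) (by norm_num), mem_seg (t := 23/28) (by norm_num) (by norm_num)
          (by norm_num) (by norm_num)⟩
      · simp [SharesEndpoint, pt_eq_iff]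
      · exact ⟨pt (-33/40) (11/10), mem_seg (t := 1/40) (by norm_num) (by norm_num)
          (by norm_num) (by norm_num), mem_seg (t := 29/40) (by norm_num) (by norm_num)
          (by norm_num) (by norm_num)⟩
    calc (7 : ℕ) = (↑({((1:Fin 7),(3:Fin 7)), (1,4), (1,5), (1,6), (2,4), (2,5), (4,6)} :
          Finset (Fin 7 × Fin 7)) : Set (Fin 7 × Fin 7)).ncard := by
            rw [Set.ncard_coe_finset]; decide
      _ ≤ _ := Set.ncard_le_ncard hsub (Set.toFinite _)
end
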